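/- For all closed PGA terms t and t', the instruction sequences denoted by t and t' in the sequence model are equal if and only if the equation t = t' is derivable from the axioms PGA1–PGA4. -/

import Mathlib

/-- Primitive instructions over a set `A` of basic instructions. -/
inductive PrimInstr (A : Type) : Type where
  | basic : A → PrimInstr A
  | pos : A → PrimInstr A
  | neg : A → PrimInstr A
  | jump : Nat → PrimInstr A
  | halt : PrimInstr A

/-- Closed PGA terms over a set `A` of basic instructions. -/
inductive PGATerm (A : Type) : Type where
  | instr : PrimInstr A → PGATerm A
  | concat : PGATerm A → PGATerm A → PGATerm A
  | rep : PGATerm A → PGATerm A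

/-- `t.pow n` is the `(n+1)`-fold concatenation `t^(n+1)` (so powers are ≥ 1). -/
def PGATerm.pow {A : Type} (t : PGATerm A) : Nat → PGATerm A
  | 0 => t
  | n + 1 => PGATerm.concat t (PGATerm.pow t n)

/-- `chain us t` is `u_1 ; u_2 ; … ; u_k ; t`. -/
def chain {A : Type} (us : List (PrimInstr A)) (t : PGATerm A) : PGATerm A :=
  us.foldr (fun u s => PGATerm.concat (PGATerm.instr u) s) t

/-- `ofList u us` is the term `u ; u_1 ; … ; u_k` (a nonempty sequence of instructions). -/
def ofList {A : Type} : PrimInstr A → List (PrimInstr A) → PGATerm A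
  | u, [] => PGATerm.instr u
  | u, v :: vs => PGATerm.concat (PGATerm.instr u) (ofList v vs)

/-- Equational-logic derivability from the axioms PGA1–PGA4 (when `full = false`) or
PGA1–PGA8 (when `full = true`). -/
inductive PGADeriv {A : Type} (full : Bool) : PGATerm A → PGATerm A → Prop where
  | refl (t : PGATerm A) : PGADeriv full t t
  | symm {t s : PGATerm A} : PGADeriv full t s → PGADeriv full s t
  | trans {t s r : PGATerm A} : PGADeriv full t s → PGADeriv full s r → PGADeriv full t r
  | concat_congr {t t' s s' : PGATerm A} : PGADeriv full t t' → PGADeriv full s s' →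
      PGADeriv full (PGATerm.concat t s) (PGATerm.concat t' s')
  | rep_congr {t t' : PGATerm A} : PGADeriv full t t' →
      PGADeriv full (PGATerm.rep t) (PGATerm.rep t')
  | pga1 (t s r : PGATerm A) :
      PGADeriv full (PGATerm.concat (PGATerm.concat t s) r)
        (PGATerm.concat t (PGATerm.concat s r))
  | pga2 (t : PGATerm A) (n : Nat) :
      PGADeriv full (PGATerm.rep (PGATerm.pow t n)) (PGATerm.rep t)
  | pga3 (t s : PGATerm A) :
      PGADeriv full (PGATerm.concat (PGATerm.rep t) s) (PGATerm.rep t)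
  | pga4 (t s : PGATerm A) :
      PGADeriv full (PGATerm.rep (PGATerm.concat t s))
        (PGATerm.concat t (PGATerm.rep (PGATerm.concat s t)))
  | pga5 (us : List (PrimInstr A)) (h : full = true) :
      PGADeriv full
        (PGATerm.concat (PGATerm.instr (PrimInstr.jump (us.length + 1)))
          (chain us (PGATerm.instr (PrimInstr.jump 0))))
        (PGATerm.concat (PGATerm.instr (PrimInstr.jump 0))
          (chain us (PGATerm.instr (PrimInstr.jump 0))))
  | pga6 (us : List (PrimInstr A)) (l : Nat) (h : full = true) :
      PGADeriv full
        (PGATerm.concat (PGATerm.instr (PrimInstr.jump (us.length + 1)))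
          (chain us (PGATerm.instr (PrimInstr.jump l))))
        (PGATerm.concat (PGATerm.instr (PrimInstr.jump (l + us.length + 1)))
          (chain us (PGATerm.instr (PrimInstr.jump l))))
  | pga7 (us : List (PrimInstr A)) (l : Nat) (h : full = true) :
      PGADeriv full (PGATerm.rep (ofList (PrimInstr.jump (l + us.length + 1)) us))
        (PGATerm.rep (ofList (PrimInstr.jump l) us))
  | pga8 (us : List (PrimInstr A)) (v : PrimInstr A) (vs : List (PrimInstr A)) (l : Nat)
      (h : full = true) :
      PGADeriv full
        (PGATerm.concat (PGATerm.instr (PrimInstr.jump (l + us.length + vs.length + 2)))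
          (chain us (PGATerm.rep (ofList v vs))))
        (PGATerm.concat (PGATerm.instr (PrimInstr.jump (l + us.length + 1)))
          (chain us (PGATerm.rep (ofList v vs))))
/-- The sequence model: non-empty finite or infinite sequences of primitive instructions
(finite sequences as lists, infinite ones as functions on `Nat`). -/
inductive ISeq (A : Type) : Type where
  | fin : List (PrimInstr A) → ISeq A
  | inf : (Nat → PrimInstr A) → ISeq A

/-- Concatenation of instruction sequences; concatenating an infinite sequence with any
sequence yields the former sequence. -/
def ISeq.seqConcat {A : Type} : ISeq A → ISeq A → ISeq A
  | ISeq.fin l, ISeq.fin l' => ISeq.fin (l ++ l')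
  | ISeq.fin l, ISeq.inf f =>
      ISeq.inf (fun n => if h : n < l.length then l.get ⟨n, h⟩ else f (n - l.length))
  | ISeq.inf f, _ => ISeq.inf f

/-- Repetition: the sequence concatenated with itself infinitely many times. -/
def ISeq.seqRep {A : Type} : ISeq A → ISeq A
  | ISeq.fin [] => ISeq.fin []
  | ISeq.fin (u :: l) =>
      ISeq.inf (fun n => (u :: l).get ⟨n % (u :: l).length, Nat.mod_lt n (Nat.succ_pos l.length)⟩)
  | ISeq.inf f => ISeq.inf f

/-- The instruction sequence denoted by a closed PGA term in the sequence model. -/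
def denote {A : Type} : PGATerm A → ISeq A
  | PGATerm.instr u => ISeq.fin [u]
  | PGATerm.concat t s => ISeq.seqConcat (denote t) (denote s)
  | PGATerm.rep t => ISeq.seqRep (denote t)

section Aux
variable {A : Type}
open PGATerm PrimInstr

local notation "D" => PGADeriv (A := A) false

/-- repeated list: `repList n l` is `n+1` copies of `l`. -/
def repList (l : List (PrimInstr A)) : Nat → List (PrimInstr A)
  | 0 => []
  | n+1 => l ++ repList l n

/-- `ofL` on nonempty lists. -/
def ofL : List (PrimInstr A) → PGATerm A
  | [] => .instr .halt
  | u :: us => ofList u us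

theorem ofList_append (u : PrimInstr A) (us : List (PrimInstr A)) (v : PrimInstr A)
    (vs : List (PrimInstr A)) :
    D (ofList u (us ++ v :: vs)) (.concat (ofList u us) (ofList v vs)) := by
  induction us generalizing u with
  | nil => exact .refl _
  | cons w ws ih =>
      exact .trans (.concat_congr (.refl _) (ih w)) (.symm (.pga1 _ _ _))

theorem chain_eq (u : PrimInstr A) (us : List (PrimInstr A)) (Y : PGATerm A) :
    D (chain (u :: us) Y) (.concat (ofList u us) Y) := by
  induction us generalizing u with
  | nil => exact .refl _
  | cons v vs ih =>
      exact .trans (.concat_congr (.refl _) (ih v)) (.symm (.pga1 _ _ _))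

theorem chain_append (us vs : List (PrimInstr A)) (Y : PGATerm A) :
    chain (us ++ vs) Y = chain us (chain vs Y) := List.foldr_append ..

theorem chain_congr {s s' : PGATerm A} (us : List (PrimInstr A)) (h : D s s') :
    D (chain us s) (chain us s') := by
  induction us with
  | nil => exact h
  | cons u us ih => exact .concat_congr (.refl _) ih

theorem rep_absorb (X P : PGATerm A) :
    D (.rep (.concat X (.rep P))) (.concat X (.rep P)) :=
  .trans (.pga4 _ _) (.concat_congr (.refl _) (.trans (.pga4 _ _) (.pga3 _ _)))

theorem rep_rep (P : PGATerm A) : D (.rep (.rep P)) (.rep P) :=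
  .trans (.symm (.pga2 _ 1)) (.trans (.pga4 _ _) (.pga3 _ _))

theorem rep_unfold (t : PGATerm A) : D (.rep t) (.concat t (.rep t)) :=
  .trans (.symm (.pga2 t 1)) (.trans (.pga4 t t) (.concat_congr (.refl t) (.pga2 t 1)))

theorem absorb_concat (us : List (PrimInstr A)) (P s : PGATerm A) :
    D (.concat (chain us (.rep P)) s) (chain us (.rep P)) := by
  induction us with
  | nil => exact .pga3 _ _
  | cons u us ih => exact .trans (.pga1 _ _ _) (.concat_congr (.refl _) ih)

theorem pow_ofList (u : PrimInstr A) (us : List (PrimInstr A)) :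
    ∀ n, D (ofList u (us ++ repList (u :: us) n)) (PGATerm.pow (ofList u us) n)
  | 0 => by simp [repList]; exact .refl _
  | n+1 => by
      show D (ofList u (us ++ ((u :: us) ++ repList (u :: us) n))) _
      rw [show us ++ ((u :: us) ++ repList (u :: us) n)
            = us ++ u :: (us ++ repList (u :: us) n) by simp]
      exact .trans (ofList_append u us u _)
        (.concat_congr (.refl _) (pow_ofList u us n))

/-- period multiplication -/
theorem period_mult (u : PrimInstr A) (us : List (PrimInstr A)) (n : Nat) :
    D (.rep (ofList u us)) (.rep (ofList u (us ++ repList (u :: us) n))) :=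
  .symm (.trans (.rep_congr (pow_ofList u us n)) (.pga2 _ n))

theorem rotate1 (u : PrimInstr A) (us : List (PrimInstr A)) :
    D (.rep (ofL (u :: us))) (.concat (.instr u) (.rep (ofL (us ++ [u])))) := by
  cases us with
  | nil => exact rep_unfold _
  | cons v vs =>
      exact .trans (.pga4 _ _)
        (.concat_congr (.refl _) (.rep_congr (.symm (ofList_append v vs u []))))

end Aux

section Sem
variable {A : Type}
open PGATerm PrimInstr

local notation "D" => PGADeriv (A := A) false

/-- nonemptiness predicate on sequences -/
def NEs : ISeq A → Prop
  | .fin l => l ≠ []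
  | .inf _ => True

theorem NEs_concat {x y : ISeq A} (hx : NEs x) (hy : NEs y) : NEs (ISeq.seqConcat x y) := by
  cases x with
  | fin l =>
      cases y with
      | fin m => intro h; exact hx (List.append_eq_nil_iff.1 h).1
      | inf f => simp [ISeq.seqConcat, NEs]
  | inf f => simp [ISeq.seqConcat, NEs]

theorem NEs_rep {x : ISeq A} (hx : NEs x) : NEs (ISeq.seqRep x) := by
  cases x with
  | fin l => cases l with
      | nil => exact absurd rfl hx
      | cons u l => simp [ISeq.seqRep, NEs]
  | inf f => simp [ISeq.seqRep, NEs]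

theorem NEs_denote (t : PGATerm A) : NEs (denote t) := by
  induction t with
  | instr u => simp [denote, NEs]
  | concat t s iht ihs => exact NEs_concat iht ihs
  | rep t ih => exact NEs_rep ih

theorem repList_length (l : List (PrimInstr A)) (n : Nat) :
    (repList l n).length = n * l.length := by
  induction n with
  | zero => simp [repList]
  | succ n ih => simp [repList, ih, Nat.succ_mul, Nat.add_comm]

theorem repList_get (l : List (PrimInstr A)) (hl : l ≠ []) (n : Nat) :
    ∀ j (hj : j < (repList l n).length),
      (repList l n).get ⟨j, hj⟩
        = l.get ⟨j % l.length, Nat.mod_lt _ (List.length_pos_iff.2 hl)⟩ := by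
  induction n with
  | zero => simp [repList]
  | succ n ih =>
      intro j hj
      have hj2 : j < (l ++ repList l n).length := hj
      show (l ++ repList l n).get ⟨j, hj2⟩ = _
      rcases Nat.lt_or_ge j l.length with h | h
      · rw [List.get_eq_getElem, List.getElem_append_left h]
        simp [Nat.mod_eq_of_lt h]
      · have hj' : j - l.length < (repList l n).length := by
          have := hj; simp [repList] at this; omega
        rw [List.get_eq_getElem, List.getElem_append_right h]
        show (repList l n).get ⟨j - l.length, hj'⟩ = _
        rw [ih (j - l.length) hj']
        congr 1
        exact Fin.ext (Nat.mod_eq_sub_mod h).symm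

theorem seqRep_repList (l : List (PrimInstr A)) (hl : l ≠ []) (n : Nat) :
    ISeq.seqRep (ISeq.fin (l ++ repList l n)) = ISeq.seqRep (ISeq.fin l) := by
  rcases l with _ | ⟨u, l'⟩
  · exact absurd rfl hl
  · show ISeq.seqRep (ISeq.fin (u :: (l' ++ repList (u :: l') n))) = _
    simp only [ISeq.seqRep]
    congr 1
    funext j
    have h1 : (u :: (l' ++ repList (u :: l') n)) = (u :: l') ++ repList (u :: l') n := rfl
    have hlen : (u :: (l' ++ repList (u :: l') n)).length
        = (n+1) * (u :: l').length := by
      simp [repList_length]; ring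
    have hdvd : (u :: l').length ∣ (u :: (l' ++ repList (u :: l') n)).length := by
      rw [hlen]; exact Dvd.intro_left _ rfl
    have hj : j % (u :: (l' ++ repList (u :: l') n)).length
        < (repList (u :: l') (n+1)).length := by
      rw [show repList (u :: l') (n+1) = (u::l') ++ repList (u::l') n from rfl, ← h1]
      exact Nat.mod_lt _ (by simp)
    calc (u :: (l' ++ repList (u :: l') n)).get ⟨_, _⟩
        = (repList (u :: l') (n+1)).get ⟨j % (u :: (l' ++ repList (u :: l') n)).length, hj⟩ := rfl
      _ = (u :: l').get ⟨_ % (u::l').length, _⟩ := repList_get _ (by simp) (n+1) _ hj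
      _ = (u :: l').get ⟨j % (u::l').length, Nat.mod_lt _ (by simp)⟩ := by
          congr 1
          exact Fin.ext (Nat.mod_mod_of_dvd j hdvd)

theorem denote_pow (t : PGATerm A) (l : List (PrimInstr A)) (h : denote t = .fin l) :
    ∀ n, denote (PGATerm.pow t n) = .fin (l ++ repList l n)
  | 0 => by simp [PGATerm.pow, repList, h]
  | n+1 => by
      show denote (.concat t (PGATerm.pow t n)) = _
      rw [denote, h, denote_pow t l h n]
      show ISeq.fin (l ++ (l ++ repList l n)) = _
      rw [show repList l (n+1) = l ++ repList l n from rfl]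

theorem denote_pow_inf (t : PGATerm A) (f : Nat → PrimInstr A) (h : denote t = .inf f) :
    ∀ n, denote (PGATerm.pow t n) = .inf f
  | 0 => h
  | n+1 => by
      show denote (.concat t (PGATerm.pow t n)) = _
      rw [denote, h]; rfl

end Sem

section Sound
variable {A : Type}
open PGATerm PrimInstr

theorem gic {X : Type} (l : List X) {i j : Nat} (h : i = j) {hi : i < l.length} :
    l[i]'hi = l[j]'(h ▸ hi) := by subst h; rfl

theorem seqConcat_assoc (x y z : ISeq A) :
    (x.seqConcat y).seqConcat z = x.seqConcat (y.seqConcat z) := by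
  cases x with
  | inf f => rfl
  | fin a =>
    cases y with
    | inf f => rfl
    | fin b =>
      cases z with
      | fin c => simp [ISeq.seqConcat, List.append_assoc]
      | inf f =>
        simp only [ISeq.seqConcat]
        congr 1
        funext n
        by_cases hn : n < a.length
        · rw [dif_pos hn, dif_pos (by simp; omega)]
          simp only [List.get_eq_getElem]
          exact List.getElem_append_left hn
        · rw [dif_neg hn]
          by_cases hn2 : n < a.length + b.length
          · rw [dif_pos (by simp only [List.length_append]; omega), dif_pos (by omega)]
            simp only [List.get_eq_getElem]
            rw [List.getElem_append_right (by omega)]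
          · rw [dif_neg (by simp only [List.length_append]; omega), dif_neg (by omega)]
            congr 1
            simp only [List.length_append]; omega

theorem rot_eq (a b : List (PrimInstr A)) (ha : 0 < a.length) (hb : 0 < b.length)
    (n : Nat) (p1 : n % (a ++ b).length < (a ++ b).length)
    (p2 : (n - a.length) % (b ++ a).length < (b ++ a).length) (hn : ¬ n < a.length) :
    (a ++ b).get ⟨n % (a ++ b).length, p1⟩
      = (b ++ a).get ⟨(n - a.length) % (b ++ a).length, p2⟩ := by
  simp only [List.get_eq_getElem]
  have hL : (a ++ b).length = a.length + b.length := by simp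
  have hL' : (b ++ a).length = a.length + b.length := by simp; omega
  set L := a.length + b.length with hLdef
  set m := n - a.length with hm
  have hrlt : m % L < L := Nat.mod_lt _ (by omega)
  set r := m % L with hrdef
  have hmod : n % (a ++ b).length = (r + a.length) % L := by
    rw [hL, show n = m + a.length by omega]
    conv_lhs => rw [Nat.add_mod, Nat.mod_eq_of_lt (by omega : a.length < L)]
  have hidx : (n - a.length) % (b ++ a).length = r := by rw [hL']
  by_cases hrb : r < b.length
  · have h1 : (r + a.length) % L = r + a.length := Nat.mod_eq_of_lt (by omega)
    rw [gic (a ++ b) (hmod.trans h1), gic (b ++ a) hidx,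
      List.getElem_append_right (show a.length ≤ r + a.length by omega),
      gic b (show r + a.length - a.length = r by omega),
      List.getElem_append_left hrb]
  · have h1 : (r + a.length) % L = r - b.length := by
      rw [Nat.mod_eq_sub_mod (by omega), Nat.mod_eq_of_lt (by omega)]
      omega
    rw [gic (a ++ b) (hmod.trans h1), gic (b ++ a) hidx,
      List.getElem_append_left (show r - b.length < a.length by omega),
      List.getElem_append_right (show b.length ≤ r by omega)]

theorem sem_pga4 (x y : ISeq A) (hx : NEs x) (hy : NEs y) :
    ISeq.seqRep (x.seqConcat y) = x.seqConcat (ISeq.seqRep (y.seqConcat x)) := by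
  cases x with
  | inf f => rfl
  | fin a =>
    cases y with
    | inf g =>
      rcases a with _ | ⟨u, a'⟩
      · exact absurd rfl hx
      · rfl
    | fin b =>
      rcases a with _ | ⟨u, a'⟩
      · exact absurd rfl hx
      rcases b with _ | ⟨v, b'⟩
      · exact absurd rfl hy
      show ISeq.seqRep (ISeq.fin ((u :: a') ++ (v :: b'))) = _
      rw [show (u :: a') ++ (v :: b') = u :: (a' ++ v :: b') from rfl]
      show ISeq.inf _ = (ISeq.fin (u :: a')).seqConcat
        (ISeq.seqRep (ISeq.fin ((v :: b') ++ (u :: a'))))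
      rw [show (v :: b') ++ (u :: a') = v :: (b' ++ u :: a') from rfl]
      show ISeq.inf _ = (ISeq.fin (u :: a')).seqConcat (ISeq.inf _)
      simp only [ISeq.seqConcat]
      congr 1
      funext n
      by_cases hn : n < (u :: a').length
      · rw [dif_pos hn]
        have h1 : n % (u :: (a' ++ v :: b')).length = n :=
          Nat.mod_eq_of_lt (by simp at hn ⊢; omega)
        simp only [List.get_eq_getElem, h1]
        exact List.getElem_append_left (bs := v :: b') hn
      · rw [dif_neg hn]
        exact rot_eq (u :: a') (v :: b') (by simp) (by simp) n _ _ hn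

theorem soundness {t t' : PGATerm A} (h : PGADeriv false t t') : denote t = denote t' := by
  induction h with
  | refl t => rfl
  | symm _ ih => exact ih.symm
  | trans _ _ ih1 ih2 => exact ih1.trans ih2
  | concat_congr _ _ ih1 ih2 => show ISeq.seqConcat _ _ = ISeq.seqConcat _ _; rw [ih1, ih2]
  | rep_congr _ ih => show ISeq.seqRep _ = ISeq.seqRep _; rw [ih]
  | pga1 t s r => exact seqConcat_assoc _ _ _
  | pga2 t n =>
      show ISeq.seqRep (denote (PGATerm.pow t n)) = ISeq.seqRep (denote t)
      cases hd : denote t with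
      | fin l =>
          rcases l with _ | ⟨u, l'⟩
          · exact absurd (hd ▸ NEs_denote t) (by simp [NEs])
          · rw [denote_pow t _ hd n, seqRep_repList _ (by simp) n]
      | inf f => rw [denote_pow_inf t f hd n]
  | pga3 t s =>
      show ISeq.seqConcat (ISeq.seqRep (denote t)) (denote s) = ISeq.seqRep (denote t)
      cases hd : denote t with
      | fin l =>
          rcases l with _ | ⟨u, l'⟩
          · exact absurd (hd ▸ NEs_denote t) (by simp [NEs])
          · rfl
      | inf f => rfl
  | pga4 t s =>
      exact sem_pga4 (denote t) (denote s) (NEs_denote t) (NEs_denote s)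
  | pga5 _ h => exact absurd h (by simp)
  | pga6 _ _ h => exact absurd h (by simp)
  | pga7 _ _ h => exact absurd h (by simp)
  | pga8 _ _ _ _ h => exact absurd h (by simp)

end Sound

section Comp
variable {A : Type}
open PGATerm PrimInstr

local notation "D" => PGADeriv (A := A) false

theorem denote_ofList (u : PrimInstr A) (us : List (PrimInstr A)) :
    denote (ofList u us) = .fin (u :: us) := by
  induction us generalizing u with
  | nil => rfl
  | cons v vs ih =>
      show ISeq.seqConcat (ISeq.fin [u]) (denote (ofList v vs)) = _
      rw [ih]; rfl

/-- the eventually periodic function of a normal form -/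
def NF (ps : List (PrimInstr A)) (q : PrimInstr A) (qs : List (PrimInstr A)) (n : Nat) :
    PrimInstr A :=
  if h : n < ps.length then ps.get ⟨n, h⟩
  else (q :: qs).get ⟨(n - ps.length) % (qs.length + 1), Nat.mod_lt _ (Nat.succ_pos _)⟩

theorem denote_chain_inf (us : List (PrimInstr A)) (X : PGATerm A) (g : Nat → PrimInstr A)
    (h : denote X = .inf g) :
    denote (chain us X)
      = .inf (fun n => if h : n < us.length then us.get ⟨n, h⟩ else g (n - us.length)) := by
  induction us with
  | nil =>
      rw [show chain [] X = X from rfl, h]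
      congr 1
  | cons u us ih =>
      show ISeq.seqConcat (ISeq.fin [u]) (denote (chain us X)) = _
      rw [ih]
      show ISeq.inf _ = _
      congr 1
      funext n
      beta_reduce
      by_cases hn : n < 1
      · have : n = 0 := by omega
        subst this
        rw [dif_pos (by simp), dif_pos (by simp)]
        rfl
      · rw [dif_neg (show ¬ n < [u].length by simpa using hn)]
        by_cases hn2 : n < us.length + 1
        · rw [dif_pos (show n - [u].length < us.length by simp; omega),
            dif_pos (show n < (u :: us).length by simp; omega)]
          simp only [List.get_eq_getElem]
          rw [gic (u :: us) (show n = (n - [u].length) + 1 by simp; omega),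
            List.getElem_cons_succ]
        · rw [dif_neg (show ¬ n - [u].length < us.length by simp; omega),
            dif_neg (show ¬ n < (u :: us).length by simp; omega)]
          congr 1
          simp; omega

theorem denote_nf (us : List (PrimInstr A)) (q : PrimInstr A) (qs : List (PrimInstr A)) :
    denote (chain us (.rep (ofL (q :: qs)))) = .inf (NF us q qs) := by
  have h : denote (PGATerm.rep (ofL (q :: qs)))
      = .inf (fun n => (q :: qs).get ⟨n % (qs.length + 1), Nat.mod_lt _ (Nat.succ_pos _)⟩) := by
    show ISeq.seqRep (denote (ofList q qs)) = _
    rw [denote_ofList]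
    rfl
  rw [denote_chain_inf us _ _ h]
  congr 1

theorem norm (t : PGATerm A) :
    (∃ u us, D t (ofList u us)) ∨
      (∃ us q qs, D t (chain us (.rep (ofL (q :: qs))))) := by
  induction t with
  | instr u => exact Or.inl ⟨u, [], .refl _⟩
  | concat t s iht ihs =>
      rcases iht with ⟨u, us, dt⟩ | ⟨ws, q, qs, dt⟩
      · rcases ihs with ⟨v, vs, ds⟩ | ⟨ws, q, qs, ds⟩
        · exact Or.inl ⟨u, us ++ v :: vs,
            .trans (.concat_congr dt ds) (.symm (ofList_append u us v vs))⟩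
        · refine Or.inr ⟨(u :: us) ++ ws, q, qs, ?_⟩
          rw [chain_append]
          exact .trans (.concat_congr dt ds) (.symm (chain_eq u us _))
      · exact Or.inr ⟨ws, q, qs,
          .trans (.concat_congr dt (.refl s)) (absorb_concat ws _ s)⟩
  | rep t iht =>
      rcases iht with ⟨u, us, dt⟩ | ⟨ws, q, qs, dt⟩
      · exact Or.inr ⟨[], u, us, .rep_congr dt⟩
      · rcases ws with _ | ⟨w, ws⟩
        · exact Or.inr ⟨[], q, qs, .trans (.rep_congr dt) (rep_rep _)⟩
        · refine Or.inr ⟨w :: ws, q, qs, ?_⟩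
          exact .trans (.rep_congr (.trans dt (chain_eq w ws _)))
            (.trans (rep_absorb _ _) (.symm (chain_eq w ws _)))

theorem ofFn_shift (f : Nat → PrimInstr A) (k d : Nat) :
    f k :: (List.ofFn fun i : Fin d => f (k + 1 + i)) = List.ofFn fun i : Fin (d+1) => f (k + i) := by
  apply List.ext_getElem
  · simp
  intro i h1 h2
  rcases i with _ | i
  · simp
  · simp only [List.getElem_cons_succ, List.getElem_ofFn]
    congr 1
    omega

theorem ext_prefix : ∀ (d : Nat) (us : List (PrimInstr A)) (q : PrimInstr A)
    (qs : List (PrimInstr A)) (f : Nat → PrimInstr A),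
    denote (chain us (.rep (ofL (q :: qs)))) = .inf f →
    ∃ q' qs', qs'.length = qs.length ∧
      D (chain us (.rep (ofL (q :: qs))))
        (chain (us ++ List.ofFn fun i : Fin d => f (us.length + i)) (.rep (ofL (q' :: qs'))))
  | 0, us, q, qs, f, _ => by
      refine ⟨q, qs, rfl, ?_⟩
      rw [show (us ++ List.ofFn fun i : Fin 0 => f (us.length + i)) = us by simp]
      exact .refl _
  | d+1, us, q, qs, f, hden => by
      have hNF : NF us q qs = f := by
        rw [denote_nf] at hden
        exact ISeq.inf.inj hden
      have hq : f us.length = q := by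
        rw [← hNF]
        simp [NF]
      have d1 : D (chain us (.rep (ofL (q :: qs))))
          (chain (us ++ [q]) (.rep (ofL (qs ++ [q])))) := by
        rw [chain_append]
        exact chain_congr us (rotate1 q qs)
      obtain ⟨r, rs, hrs⟩ := List.exists_cons_of_ne_nil (show qs ++ [q] ≠ [] by simp)
      rw [hrs] at d1
      have hden2 : denote (chain (us ++ [q]) (.rep (ofL (r :: rs)))) = .inf f :=
        (soundness d1).symm.trans hden
      obtain ⟨q', qs', hlen, d2⟩ := ext_prefix d (us ++ [q]) r rs f hden2
      refine ⟨q', qs', ?_, ?_⟩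
      · have : rs.length = qs.length := by
          have := congrArg List.length hrs
          simp at this
          omega
        omega
      · have hlist : ((us ++ [q]) ++ List.ofFn fun i : Fin d => f ((us ++ [q]).length + i))
            = us ++ List.ofFn fun i : Fin (d+1) => f (us.length + i) := by
          rw [List.append_assoc]
          congr 1
          show q :: (List.ofFn fun i : Fin d => f ((us ++ [q]).length + i)) = _
          rw [← ofFn_shift f us.length d, ← hq]
          congr 2
          funext i
          congr 1
          simp only [List.length_append, List.length_cons, List.length_nil]
        rw [hlist] at d2
        exact d1.trans d2

theorem prefix_list_eq (us : List (PrimInstr A)) (f : Nat → PrimInstr A) (L : Nat)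
    (hL : us.length ≤ L) (h : ∀ i (hi : i < us.length), us.get ⟨i, hi⟩ = f i) :
    (us ++ List.ofFn fun i : Fin (L - us.length) => f (us.length + i))
      = List.ofFn fun i : Fin L => f i := by
  apply List.ext_getElem
  · simp; omega
  intro i hi1 hi2
  rw [List.getElem_ofFn]
  by_cases hc : i < us.length
  · rw [List.getElem_append_left hc]
    exact h i hc
  · rw [List.getElem_append_right (by omega), List.getElem_ofFn]
    congr 1
    simp
    omega

theorem period_det (C : List (PrimInstr A)) (r : PrimInstr A) (rs : List (PrimInstr A))
    (f : Nat → PrimInstr A) (h : denote (chain C (.rep (ofL (r :: rs)))) = .inf f) :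
    ∀ j (hj : j < (r :: rs).length), (r :: rs).get ⟨j, hj⟩ = f (C.length + j) := by
  rw [denote_nf] at h
  have hNF : NF C r rs = f := ISeq.inf.inj h
  intro j hj
  rw [← hNF]
  simp only [NF, dif_neg (show ¬ C.length + j < C.length by omega)]
  congr 1
  apply Fin.ext
  show (j : Nat) = (C.length + j - C.length) % (rs.length + 1)
  rw [show C.length + j - C.length = j by omega, Nat.mod_eq_of_lt (by simpa using hj)]

end Comp

section Main
variable {A : Type}
open PGATerm PrimInstr

local notation "D" => PGADeriv (A := A) false

theorem side (us : List (PrimInstr A)) (q : PrimInstr A) (qs : List (PrimInstr A))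
    (L P : Nat) (f : Nat → PrimInstr A)
    (hf : denote (chain us (.rep (ofL (q :: qs)))) = .inf f)
    (hL : us.length ≤ L) (n : Nat) (hP : P = (n + 1) * (qs.length + 1)) :
    ∃ q1 qs1, (q1 :: qs1).length = P ∧
      D (chain us (.rep (ofL (q :: qs))))
        (chain (List.ofFn fun i : Fin L => f i) (.rep (ofL (q1 :: qs1)))) := by
  have d1 : D (chain us (.rep (ofL (q :: qs))))
      (chain us (.rep (ofL (q :: (qs ++ repList (q :: qs) n))))) :=
    chain_congr us (period_mult q qs n)
  have hden2 : denote (chain us (.rep (ofL (q :: (qs ++ repList (q :: qs) n))))) = .inf f :=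
    (soundness d1).symm.trans hf
  obtain ⟨q', qs', hlen, d2⟩ := ext_prefix (L - us.length) us q (qs ++ repList (q :: qs) n) f hden2
  have husget : ∀ i (hi : i < us.length), us.get ⟨i, hi⟩ = f i := by
    rw [denote_nf] at hf
    have hNF := ISeq.inf.inj hf
    intro i hi
    rw [← hNF]
    simp [NF, hi]
  rw [prefix_list_eq us f L hL husget] at d2
  refine ⟨q', qs', ?_, d1.trans d2⟩
  show qs'.length + 1 = P
  rw [hlen]
  simp [repList_length, hP]
  ring

end Main

/-- Closed PGA terms denote the same instruction sequence in the sequence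
model iff their equation is derivable from PGA1–PGA4. -/
theorem pga_iseq_congruence (A : Type) (hA : Nonempty A) (t t' : PGATerm A) :
    denote t = denote t' ↔ PGADeriv false t t' := by
  constructor
  · intro h
    rcases norm t with ⟨u, us, dt⟩ | ⟨us, q, qs, dt⟩ <;>
      rcases norm t' with ⟨u', us', dt'⟩ | ⟨us', q', qs', dt'⟩
    · have e : (ISeq.fin (u :: us) : ISeq A) = ISeq.fin (u' :: us') := by
        rw [← denote_ofList, ← denote_ofList]
        exact (soundness dt).symm.trans (h.trans (soundness dt'))
      have e2 : u :: us = u' :: us' := ISeq.fin.inj e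
      injection e2 with e3 e4
      subst e3; subst e4
      exact dt.trans dt'.symm
    · exfalso
      have e := (soundness dt).symm.trans (h.trans (soundness dt'))
      rw [denote_ofList, denote_nf] at e
      cases e
    · exfalso
      have e := (soundness dt).symm.trans (h.trans (soundness dt'))
      rw [denote_nf, denote_ofList] at e
      cases e
    · have h1 : denote (chain us (.rep (ofL (q :: qs)))) = .inf (NF us q qs) :=
        denote_nf us q qs
      have h2 : denote (chain us' (.rep (ofL (q' :: qs')))) = .inf (NF us q qs) :=
        ((soundness dt').symm.trans (h.symm.trans (soundness dt))).trans h1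
      obtain ⟨q1, qs1, hl1, D1⟩ := side us q qs (max us.length us'.length)
        ((qs.length + 1) * (qs'.length + 1)) (NF us q qs) h1 (le_max_left _ _)
        qs'.length (by ring)
      obtain ⟨q2, qs2, hl2, D2⟩ := side us' q' qs' (max us.length us'.length)
        ((qs.length + 1) * (qs'.length + 1)) (NF us q qs) h2 (le_max_right _ _)
        qs.length (by ring)
      have hd1 : denote (chain (List.ofFn fun i : Fin (max us.length us'.length) => NF us q qs i)
          (.rep (ofL (q1 :: qs1)))) = .inf (NF us q qs) := (soundness D1).symm.trans h1
      have hd2 : denote (chain (List.ofFn fun i : Fin (max us.length us'.length) => NF us q qs i)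
          (.rep (ofL (q2 :: qs2)))) = .inf (NF us q qs) := (soundness D2).symm.trans h2
      have pe : q1 :: qs1 = q2 :: qs2 := by
        apply List.ext_get (by rw [hl1, hl2])
        intro j hj1 hj2
        rw [period_det _ q1 qs1 _ hd1 j hj1, period_det _ q2 qs2 _ hd2 j hj2]
      injection pe with pe1 pe2
      subst pe1; subst pe2
      exact dt.trans (D1.trans (D2.symm.trans dt'.symm))
  · exact soundness
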